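/- Let (Y_k) be an irreducible discrete-time Markov chain on a finite state space Ω, reversible with respect to π, and let t_stop be the maximal over starting states x of the minimal expected value of a randomized stopping time T with P_x(X_T = y) = π(y) for all y (a 'stationary stopping time'). Then for every subset A ⊆ Ω, max_{x∈Ω} E_x[T_A] ≤ E_π[T_A] + t_stop, where T_A is the hitting time of A and E_π[T_A] = Σ_x π(x)E_x[T_A]. -/
import Mathlib


noncomputable section

variable {Ω : Type*} [Fintype Ω] [DecidableEq Ω]

/-- Lemma 4.4. Let `P` be an irreducible transition matrix on a finite state
space, reversible w.r.t. `π`. Let `tstop` bound, for every starting state `x`, the minimal mean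
of a randomized stationary stopping time from `x`; by the Lovász–Winkler exit-frequency
characterization, this means: for every `x` there is an occupation vector `ρ ≥ 0` with
`ρ(I − P) = δ_x − π` and total mass `Σ ρ ≤ tstop`. Let `tA x = E_x[T_A]` be the expected
hitting times of a set `A`, characterized as the nonnegative solution of `tA = 0` on `A` and
`tA x = 1 + Σ_y P(x,y) tA y` off `A`. Then `max_x E_x[T_A] ≤ E_π[T_A] + tstop`. -/
theorem stmt14 (P : Matrix Ω Ω ℝ)
    (hP0 : ∀ x y, 0 ≤ P x y) (hP1 : ∀ x, ∑ y, P x y = 1)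
    (hirr : ∀ x y, ∃ n : ℕ, 0 < (P ^ n) x y)
    (π : Ω → ℝ) (hπpos : ∀ x, 0 < π x) (hπsum : ∑ x, π x = 1)
    (hrev : ∀ x y, π x * P x y = π y * P y x)
    (tstop : ℝ)
    (hstop : ∀ x : Ω, ∃ ρ : Ω → ℝ, (∀ y, 0 ≤ ρ y) ∧
      (∀ y, ρ y - ∑ z, ρ z * P z y = (if y = x then (1 : ℝ) else 0) - π y) ∧
      ∑ y, ρ y ≤ tstop)
    (A : Finset Ω) (tA : Ω → ℝ)
    (htA0 : ∀ x ∈ A, tA x = 0)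
    (htAnonneg : ∀ x, 0 ≤ tA x)
    (htArec : ∀ x ∉ A, tA x = 1 + ∑ y, P x y * tA y) :
    ∀ x : Ω, tA x ≤ (∑ y, π y * tA y) + tstop := by
  intro x
  obtain ⟨ρ, hρ0, hρeq, hρsum⟩ := hstop x
  have key : tA x - ∑ y, π y * tA y = ∑ z, ρ z * (tA z - ∑ y, P z y * tA y) := by
    calc tA x - ∑ y, π y * tA y
        = ∑ y, ((if y = x then (1:ℝ) else 0) - π y) * tA y := by
          simp [sub_mul, Finset.sum_sub_distrib, ite_mul]
      _ = ∑ y, (ρ y - ∑ z, ρ z * P z y) * tA y := by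
          exact Finset.sum_congr rfl fun y _ => by rw [hρeq y]
      _ = ∑ z, ρ z * (tA z - ∑ y, P z y * tA y) := by
          simp only [sub_mul, mul_sub, Finset.sum_sub_distrib, Finset.sum_mul,
            Finset.mul_sum]
          rw [Finset.sum_comm]
          ring_nf
  have bound : ∑ z, ρ z * (tA z - ∑ y, P z y * tA y) ≤ ∑ z, ρ z := by
    apply Finset.sum_le_sum
    intro z _
    have h1 : tA z - ∑ y, P z y * tA y ≤ 1 := by
      by_cases hz : z ∈ A
      · have h2 : 0 ≤ ∑ y, P z y * tA y :=
          Finset.sum_nonneg fun y _ => mul_nonneg (hP0 z y) (htAnonneg y)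
        rw [htA0 z hz]; linarith
      · rw [htArec z hz]; linarith
    nlinarith [hρ0 z]
  linarith

end
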